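/- arXiv:2207.12893 — 5 statements merged into one kernel-verified Lean document; each statement's English description precedes it below -/
import Mathlib

section
/- If a twice-differentiable function ψ on an open interval satisfies ψ'' + (1/x + 1/(2(x-4)) + 1/(2(x-16)))ψ' + (x-8)/(4x(x-4)(x-16)) ψ = 0, then ω = ψ² satisfies the third-order equation ω''' + (3/x + 3/(2(x-4)) + 3/(2(x-16)))ω'' + (7x²-68x+64)/(x²(x-4)(x-16)) ω' + 1/(x²(x-16)) ω = 0. -/
set_option maxHeartbeats 1000000


theorem banana_symmetric_square
    (s : Set ℝ) (hs : IsOpen s)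
    (hx : ∀ x ∈ s, x ≠ 0 ∧ x ≠ 4 ∧ x ≠ 16)
    (ψ : ℝ → ℝ) (hψ : ContDiffOn ℝ 2 ψ s)
    (hode : ∀ x ∈ s, deriv (deriv ψ) x
      + (1/x + 1/(2*(x-4)) + 1/(2*(x-16))) * deriv ψ x
      + (x-8)/(4*x*(x-4)*(x-16)) * ψ x = 0) :
    ∀ x ∈ s, deriv (deriv (deriv (fun t => ψ t ^ 2))) x
      + (3/x + 3/(2*(x-4)) + 3/(2*(x-16))) * deriv (deriv (fun t => ψ t ^ 2)) x
      + (7*x^2 - 68*x + 64)/(x^2*(x-4)*(x-16)) * deriv (fun t => ψ t ^ 2) x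
      + 1/(x^2*(x-16)) * ψ x ^ 2 = 0 := by
  -- differentiability facts
  have hD1 : ∀ y ∈ s, HasDerivAt ψ (deriv ψ y) y := by
    intro y hy
    exact (((hψ y hy).contDiffAt (hs.mem_nhds hy)).differentiableAt
      (by norm_num)).hasDerivAt
  have hD2' : ContDiffOn ℝ 1 (deriv ψ) s :=
    hψ.deriv_of_isOpen hs (by norm_num)
  have hD2 : ∀ y ∈ s, HasDerivAt (deriv ψ) (deriv (deriv ψ) y) y := by
    intro y hy
    exact (((hD2' y hy).contDiffAt (hs.mem_nhds hy)).differentiableAt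
      (by norm_num)).hasDerivAt
  -- the ODE rearranged
  have hg : ∀ y ∈ s, deriv (deriv ψ) y
      = -((1/y + 1/(2*(y-4)) + 1/(2*(y-16))) * deriv ψ y)
        - (y-8)/(4*y*(y-4)*(y-16)) * ψ y := by
    intro y hy
    have := hode y hy
    linarith
  -- first derivative of ψ²
  have hw1 : ∀ y ∈ s, deriv (fun t => ψ t ^ 2) y = 2 * ψ y * deriv ψ y := by
    intro y hy
    have h := ((hD1 y hy).fun_pow 2).deriv
    simpa using h
  -- second derivative of ψ²
  have hw2 : ∀ y ∈ s, deriv (deriv (fun t => ψ t ^ 2)) y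
      = 2 * deriv ψ y * deriv ψ y + 2 * ψ y * deriv (deriv ψ) y := by
    intro y hy
    have hev : deriv (fun t => ψ t ^ 2) =ᶠ[nhds y] fun z => 2 * ψ z * deriv ψ z :=
      Filter.eventually_of_mem (hs.mem_nhds hy) (fun z hz => hw1 z hz)
    rw [hev.deriv_eq]
    have h : HasDerivAt (fun z => 2 * ψ z * deriv ψ z)
        (2 * deriv ψ y * deriv ψ y + 2 * ψ y * deriv (deriv ψ) y) y := by
      have h' := (((hD1 y hy).const_mul (2:ℝ)).fun_mul (hD2 y hy))
      convert h' using 1 <;> ring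
    exact h.deriv
  -- now work at the point x
  intro x hxs
  obtain ⟨hx0, hx4, hx16⟩ := hx x hxs
  have hx4' : x - 4 ≠ 0 := sub_ne_zero.mpr hx4
  have hx16' : x - 16 ≠ 0 := sub_ne_zero.mpr hx16
  have h24 : (2:ℝ)*(x-4) ≠ 0 := mul_ne_zero two_ne_zero hx4'
  have h216 : (2:ℝ)*(x-16) ≠ 0 := mul_ne_zero two_ne_zero hx16'
  have hden : (4:ℝ)*x*(x-4)*(x-16) ≠ 0 :=
    mul_ne_zero (mul_ne_zero (mul_ne_zero four_ne_zero hx0) hx4') hx16'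
  have hx1 := hD1 x hxs
  have hx2 := hD2 x hxs
  -- derivative of p
  have hpd : HasDerivAt (fun y : ℝ => 1/y + 1/(2*(y-4)) + 1/(2*(y-16)))
      ((0*x - 1*1)/x^2 + (0*(2*(x-4)) - 1*(2*(1-0)))/(2*(x-4))^2
        + (0*(2*(x-16)) - 1*(2*(1-0)))/(2*(x-16))^2) x := by
    have h1 : HasDerivAt (fun y : ℝ => 1/y) ((0*x - 1*1)/x^2) x :=
      (hasDerivAt_const x (1:ℝ)).div (hasDerivAt_id x) hx0
    have h2 : HasDerivAt (fun y : ℝ => 1/(2*(y-4)))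
        ((0*(2*(x-4)) - 1*(2*(1-0)))/(2*(x-4))^2) x :=
      (hasDerivAt_const x (1:ℝ)).div
        ((((hasDerivAt_id x).sub (hasDerivAt_const x 4)).const_mul 2)) h24
    have h3 : HasDerivAt (fun y : ℝ => 1/(2*(y-16)))
        ((0*(2*(x-16)) - 1*(2*(1-0)))/(2*(x-16))^2) x :=
      (hasDerivAt_const x (1:ℝ)).div
        ((((hasDerivAt_id x).sub (hasDerivAt_const x 16)).const_mul 2)) h216
    exact (h1.add h2).add h3
  -- derivative of q
  have hqd : HasDerivAt (fun y : ℝ => (y-8)/(4*y*(y-4)*(y-16)))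
      (((1-0)*(4*x*(x-4)*(x-16)) - (x-8)*((4*1*(x-4) + 4*x*(1-0))*(x-16)
        + 4*x*(x-4)*(1-0)))/(4*x*(x-4)*(x-16))^2) x := by
    have hnum : HasDerivAt (fun y : ℝ => y - 8) (1-0) x :=
      (hasDerivAt_id x).sub (hasDerivAt_const x 8)
    have hden' : HasDerivAt (fun y : ℝ => 4*y*(y-4)*(y-16))
        ((4*1*(x-4) + 4*x*(1-0))*(x-16) + 4*x*(x-4)*(1-0)) x :=
      ((((hasDerivAt_id x).const_mul 4).mul
        ((hasDerivAt_id x).sub (hasDerivAt_const x 4))).mul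
        ((hasDerivAt_id x).sub (hasDerivAt_const x 16)))
    exact hnum.div hden' hden
  -- derivative of G := -(p·ψ') - q·ψ
  have hG : HasDerivAt (fun y => -((1/y + 1/(2*(y-4)) + 1/(2*(y-16))) * deriv ψ y)
        - (y-8)/(4*y*(y-4)*(y-16)) * ψ y)
      (-(((0*x - 1*1)/x^2 + (0*(2*(x-4)) - 1*(2*(1-0)))/(2*(x-4))^2
          + (0*(2*(x-16)) - 1*(2*(1-0)))/(2*(x-16))^2) * deriv ψ x
          + (1/x + 1/(2*(x-4)) + 1/(2*(x-16))) * deriv (deriv ψ) x)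
        - ((((1-0)*(4*x*(x-4)*(x-16)) - (x-8)*((4*1*(x-4) + 4*x*(1-0))*(x-16)
            + 4*x*(x-4)*(1-0)))/(4*x*(x-4)*(x-16))^2) * ψ x
          + (x-8)/(4*x*(x-4)*(x-16)) * deriv ψ x)) x :=
    ((hpd.mul hx2).neg).sub (hqd.mul hx1)
  -- eventual form of the second derivative, with ψ'' eliminated
  have hg' : deriv (deriv (fun t => ψ t ^ 2)) =ᶠ[nhds x]
      fun y => 2 * deriv ψ y * deriv ψ y
        + 2 * ψ y * (-((1/y + 1/(2*(y-4)) + 1/(2*(y-16))) * deriv ψ y)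
          - (y-8)/(4*y*(y-4)*(y-16)) * ψ y) := by
    filter_upwards [hs.mem_nhds hxs] with y hy
    rw [hw2 y hy, hg y hy]
  -- third derivative of ψ² at x
  have hw3 : deriv (deriv (deriv (fun t => ψ t ^ 2))) x
      = (2 * deriv (deriv ψ) x * deriv ψ x + 2 * deriv ψ x * deriv (deriv ψ) x)
        + ((2 * deriv ψ x)
            * (-((1/x + 1/(2*(x-4)) + 1/(2*(x-16))) * deriv ψ x)
              - (x-8)/(4*x*(x-4)*(x-16)) * ψ x)
          + (2 * ψ x)
            * (-(((0*x - 1*1)/x^2 + (0*(2*(x-4)) - 1*(2*(1-0)))/(2*(x-4))^2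
                + (0*(2*(x-16)) - 1*(2*(1-0)))/(2*(x-16))^2) * deriv ψ x
                + (1/x + 1/(2*(x-4)) + 1/(2*(x-16))) * deriv (deriv ψ) x)
              - ((((1-0)*(4*x*(x-4)*(x-16)) - (x-8)*((4*1*(x-4) + 4*x*(1-0))*(x-16)
                  + 4*x*(x-4)*(1-0)))/(4*x*(x-4)*(x-16))^2) * ψ x
                + (x-8)/(4*x*(x-4)*(x-16)) * deriv ψ x))) := by
    rw [hg'.deriv_eq]
    exact (((hx2.const_mul (2:ℝ)).mul hx2).add
      ((hx1.const_mul (2:ℝ)).mul hG)).deriv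
  rw [hw3, hw2 x hxs, hw1 x hxs, hg x hxs]
  field_simp
  ring
end

section
/- If ψ₁ and ψ₂ both satisfy L₂ψ = 0 where L₂ = d²/dx² + (1/x + 1/(2(x-4)) + 1/(2(x-16))) d/dx + (x-8)/(4x(x-4)(x-16)), then the product ψ₁ψ₂ satisfies L₃(ψ₁ψ₂) = 0 where L₃ = d³/dx³ + (3/x + 3/(2(x-4)) + 3/(2(x-16))) d²/dx² + (7x²-68x+64)/(x²(x-4)(x-16)) d/dx + 1/(x²(x-16)). -/
noncomputable def Pban : ℝ → ℝ := fun t => 1/t + 1/(2*(t-4)) + 1/(2*(t-16))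
noncomputable def Qban : ℝ → ℝ := fun t => (t-8)/(4*t*(t-4)*(t-16))

lemma Pban_hasDerivAt {x : ℝ} (h0 : x ≠ 0) (h4 : x - 4 ≠ 0) (h16 : x - 16 ≠ 0) :
    HasDerivAt Pban (-(1/x^2) - 2/(2*(x-4))^2 - 2/(2*(x-16))^2) x := by
  have hA : HasDerivAt (fun t : ℝ => 1/t) (-(1/x^2)) x := by
    simpa [one_div] using hasDerivAt_inv h0
  have hd4 : HasDerivAt (fun t : ℝ => 2*(t-4)) 2 x := by
    simpa using ((hasDerivAt_id x).sub_const (4:ℝ)).const_mul 2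
  have hd16 : HasDerivAt (fun t : ℝ => 2*(t-16)) 2 x := by
    simpa using ((hasDerivAt_id x).sub_const (16:ℝ)).const_mul 2
  have hB := (hasDerivAt_const x (1:ℝ)).div hd4 (mul_ne_zero two_ne_zero h4)
  have hC := (hasDerivAt_const x (1:ℝ)).div hd16 (mul_ne_zero two_ne_zero h16)
  have := (hA.add hB).add hC
  exact this.congr_deriv (by ring)

lemma Qban_hasDerivAt {x : ℝ} (h0 : x ≠ 0) (h4 : x - 4 ≠ 0) (h16 : x - 16 ≠ 0) :
    HasDerivAt Qban
      ((1*(4*x*(x-4)*(x-16)) - (x-8)*(12*x^2-160*x+256)) / (4*x*(x-4)*(x-16))^2) x := by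
  have hnum : HasDerivAt (fun t : ℝ => t - 8) 1 x := (hasDerivAt_id x).sub_const 8
  have hden : HasDerivAt (fun t : ℝ => 4*t*(t-4)*(t-16)) (12*x^2-160*x+256) x := by
    have h1 : HasDerivAt (fun t : ℝ => 4*t) 4 x := by
      simpa using (hasDerivAt_id x).const_mul (4:ℝ)
    have h3 := (h1.mul ((hasDerivAt_id x).sub_const (4:ℝ))).mul
      ((hasDerivAt_id x).sub_const (16:ℝ))
    simp only [id_eq] at h3
    exact h3.congr_deriv (by simp only [Pi.mul_apply]; ring)
  exact hnum.div hden (by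
    exact mul_ne_zero (mul_ne_zero (mul_ne_zero (by norm_num) h0) h4) h16)

set_option maxHeartbeats 2000000 in
theorem banana_symmetric_square_product
    (s : Set ℝ) (hs : IsOpen s)
    (hx : ∀ x ∈ s, x ≠ 0 ∧ x ≠ 4 ∧ x ≠ 16)
    (ψ₁ ψ₂ : ℝ → ℝ) (hψ₁ : ContDiffOn ℝ 2 ψ₁ s) (hψ₂ : ContDiffOn ℝ 2 ψ₂ s)
    (hode₁ : ∀ x ∈ s, deriv (deriv ψ₁) x
      + (1/x + 1/(2*(x-4)) + 1/(2*(x-16))) * deriv ψ₁ x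
      + (x-8)/(4*x*(x-4)*(x-16)) * ψ₁ x = 0)
    (hode₂ : ∀ x ∈ s, deriv (deriv ψ₂) x
      + (1/x + 1/(2*(x-4)) + 1/(2*(x-16))) * deriv ψ₂ x
      + (x-8)/(4*x*(x-4)*(x-16)) * ψ₂ x = 0) :
    ∀ x ∈ s, deriv (deriv (deriv (fun t => ψ₁ t * ψ₂ t))) x
      + (3/x + 3/(2*(x-4)) + 3/(2*(x-16))) * deriv (deriv (fun t => ψ₁ t * ψ₂ t)) x
      + (7*x^2 - 68*x + 64)/(x^2*(x-4)*(x-16)) * deriv (fun t => ψ₁ t * ψ₂ t) x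
      + 1/(x^2*(x-16)) * (ψ₁ x * ψ₂ x) = 0 := by
  -- differentiability facts
  have hdψ₁ : DifferentiableOn ℝ ψ₁ s := hψ₁.differentiableOn two_ne_zero
  have hdψ₂ : DifferentiableOn ℝ ψ₂ s := hψ₂.differentiableOn two_ne_zero
  have hdu : DifferentiableOn ℝ (deriv ψ₁) s :=
    (hψ₁.deriv_of_isOpen (m := 1) hs (by norm_num)).differentiableOn one_ne_zero
  have hdv : DifferentiableOn ℝ (deriv ψ₂) s :=
    (hψ₂.deriv_of_isOpen (m := 1) hs (by norm_num)).differentiableOn one_ne_zero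
  -- rearranged ODEs
  have hu2 : ∀ t ∈ s, deriv (deriv ψ₁) t = -(Pban t * deriv ψ₁ t) - Qban t * ψ₁ t := by
    intro t ht
    have := hode₁ t ht
    simp only [Pban, Qban]
    linarith
  have hv2 : ∀ t ∈ s, deriv (deriv ψ₂) t = -(Pban t * deriv ψ₂ t) - Qban t * ψ₂ t := by
    intro t ht
    have := hode₂ t ht
    simp only [Pban, Qban]
    linarith
  -- first derivative of the product on s
  have hg1 : ∀ t ∈ s, deriv (fun r => ψ₁ r * ψ₂ r) t
      = deriv ψ₁ t * ψ₂ t + ψ₁ t * deriv ψ₂ t := by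
    intro t ht
    exact (((hdψ₁ t ht).differentiableAt (hs.mem_nhds ht)).hasDerivAt.mul
      ((hdψ₂ t ht).differentiableAt (hs.mem_nhds ht)).hasDerivAt).deriv
  -- second derivative of the product on s
  have hg2 : ∀ t ∈ s, deriv (deriv (fun r => ψ₁ r * ψ₂ r)) t
      = -(Pban t * (deriv ψ₁ t * ψ₂ t + ψ₁ t * deriv ψ₂ t))
        - 2 * Qban t * (ψ₁ t * ψ₂ t) + 2 * (deriv ψ₁ t * deriv ψ₂ t) := by
    intro t ht
    have hev : deriv (fun r => ψ₁ r * ψ₂ r)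
        =ᶠ[nhds t] fun r => deriv ψ₁ r * ψ₂ r + ψ₁ r * deriv ψ₂ r :=
      Filter.eventuallyEq_of_mem (hs.mem_nhds ht) (fun r hr => hg1 r hr)
    rw [hev.deriv_eq]
    have H : HasDerivAt (fun r => deriv ψ₁ r * ψ₂ r + ψ₁ r * deriv ψ₂ r)
        (deriv (deriv ψ₁) t * ψ₂ t + deriv ψ₁ t * deriv ψ₂ t
          + (deriv ψ₁ t * deriv ψ₂ t + ψ₁ t * deriv (deriv ψ₂) t)) t :=
      (((hdu t ht).differentiableAt (hs.mem_nhds ht)).hasDerivAt.mul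
        ((hdψ₂ t ht).differentiableAt (hs.mem_nhds ht)).hasDerivAt).add
      (((hdψ₁ t ht).differentiableAt (hs.mem_nhds ht)).hasDerivAt.mul
        ((hdv t ht).differentiableAt (hs.mem_nhds ht)).hasDerivAt)
    rw [H.deriv, hu2 t ht, hv2 t ht]
    ring
  intro x hxs
  obtain ⟨hx0, hx4, hx16⟩ := hx x hxs
  have hx4' : x - 4 ≠ 0 := sub_ne_zero.mpr hx4
  have hx16' : x - 16 ≠ 0 := sub_ne_zero.mpr hx16
  -- third derivative at x
  have hev3 : deriv (deriv (fun r => ψ₁ r * ψ₂ r))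
      =ᶠ[nhds x] fun r => -(Pban r * (deriv ψ₁ r * ψ₂ r + ψ₁ r * deriv ψ₂ r))
        - 2 * Qban r * (ψ₁ r * ψ₂ r) + 2 * (deriv ψ₁ r * deriv ψ₂ r) :=
    Filter.eventuallyEq_of_mem (hs.mem_nhds hxs) (fun r hr => hg2 r hr)
  have hP' := Pban_hasDerivAt hx0 hx4' hx16'
  have hQ' := Qban_hasDerivAt hx0 hx4' hx16'
  have ha : HasDerivAt ψ₁ (deriv ψ₁ x) x :=
    ((hdψ₁ x hxs).differentiableAt (hs.mem_nhds hxs)).hasDerivAt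
  have hb : HasDerivAt ψ₂ (deriv ψ₂ x) x :=
    ((hdψ₂ x hxs).differentiableAt (hs.mem_nhds hxs)).hasDerivAt
  have hua : HasDerivAt (deriv ψ₁) (deriv (deriv ψ₁) x) x :=
    ((hdu x hxs).differentiableAt (hs.mem_nhds hxs)).hasDerivAt
  have hvb : HasDerivAt (deriv ψ₂) (deriv (deriv ψ₂) x) x :=
    ((hdv x hxs).differentiableAt (hs.mem_nhds hxs)).hasDerivAt
  have H1 := (hP'.mul ((hua.mul hb).add (ha.mul hvb))).neg
  have H2 := (hQ'.const_mul (2:ℝ)).mul (ha.mul hb)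
  have H3 := (hua.mul hvb).const_mul (2:ℝ)
  have H := (H1.sub H2).add H3
  have H' : HasDerivAt (fun r => -(Pban r * (deriv ψ₁ r * ψ₂ r + ψ₁ r * deriv ψ₂ r))
      - 2 * Qban r * (ψ₁ r * ψ₂ r) + 2 * (deriv ψ₁ r * deriv ψ₂ r)) _ x := H
  rw [hev3.deriv_eq, H'.deriv, Pi.mul_apply, Pi.add_apply, Pi.mul_apply, Pi.mul_apply, hg2 x hxs, hg1 x hxs, hu2 x hxs, hv2 x hxs]
  simp only [Pban, Qban]
  field_simp
  ring
end

section
/- If a twice-differentiable nonvanishing function ω₁ on an interval avoiding 0, 4, 16 satisfies the nonlinear equation (ln ω₁)'' + (1/2)((ln ω₁)')² + 2(x²-15x+32)/(x(x-4)(x-16)) (ln ω₁)' + (x-8)/(2x(x-4)(x-16)) = 0, then ω₁ satisfies L₃ ω₁ = 0, where L₃ = d³/dx³ + (3/x + 3/(2(x-4)) + 3/(2(x-16))) d²/dx² + (7x²-68x+64)/(x²(x-4)(x-16)) d/dx + 1/(x²(x-16)). -/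
lemma hq_deriv (x : ℝ) : HasDerivAt (fun t : ℝ => t*(t-4)*(t-16)) (3*x^2 - 40*x + 64) x := by
  have h := ((hasDerivAt_id x).mul ((hasDerivAt_id x).sub_const 4)).mul
      ((hasDerivAt_id x).sub_const 16)
  simp only [id, Pi.mul_def] at h
  exact h.congr_deriv (by ring)

lemma hp_deriv (x : ℝ) : HasDerivAt (fun t : ℝ => 2*(t^2 - 15*t + 32)) (2*(2*x - 15)) x := by
  have h := ((((hasDerivAt_pow 2 x).sub ((hasDerivAt_id x).const_mul 15)).add_const 32).const_mul 2)
  simp only [id, Pi.mul_def] at h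
  exact h.congr_deriv (by ring)

lemma hq2_deriv (x : ℝ) : HasDerivAt (fun t : ℝ => 2*t*(t-4)*(t-16)) (2*(3*x^2 - 40*x + 64)) x := by
  have h := ((((hasDerivAt_id x).const_mul 2).mul ((hasDerivAt_id x).sub_const 4)).mul
      ((hasDerivAt_id x).sub_const 16))
  simp only [id, Pi.mul_def] at h
  exact h.congr_deriv (by ring)

set_option maxHeartbeats 1600000 in
theorem nonlinear_implies_L3
    (s : Set ℝ) (hs : IsOpen s)
    (hx : ∀ x ∈ s, x ≠ 0 ∧ x ≠ 4 ∧ x ≠ 16)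
    (ω : ℝ → ℝ) (hω : ContDiffOn ℝ 2 ω s) (hnz : ∀ x ∈ s, ω x ≠ 0)
    (hode : ∀ x ∈ s, deriv (fun t => deriv ω t / ω t) x
      + (1/2) * (deriv ω x / ω x)^2
      + 2*(x^2 - 15*x + 32)/(x*(x-4)*(x-16)) * (deriv ω x / ω x)
      + (x-8)/(2*x*(x-4)*(x-16)) = 0) :
    ∀ x ∈ s, deriv (deriv (deriv ω)) x
      + (3/x + 3/(2*(x-4)) + 3/(2*(x-16))) * deriv (deriv ω) x
      + (7*x^2 - 68*x + 64)/(x^2*(x-4)*(x-16)) * deriv ω x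
      + 1/(x^2*(x-16)) * ω x = 0 := by
  have hωd : DifferentiableOn ℝ ω s := hω.differentiableOn two_ne_zero
  have hω1C : ContDiffOn ℝ 1 (deriv ω) s := hω.deriv_of_isOpen hs (by norm_num)
  have hω1d : DifferentiableOn ℝ (deriv ω) s := hω1C.differentiableOn one_ne_zero
  have hW : ∀ t ∈ s, HasDerivAt ω (deriv ω t) t := fun t ht =>
    ((hωd t ht).differentiableAt (hs.mem_nhds ht)).hasDerivAt
  have hW1 : ∀ t ∈ s, HasDerivAt (deriv ω) (deriv (deriv ω) t) t := fun t ht =>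
    ((hω1d t ht).differentiableAt (hs.mem_nhds ht)).hasDerivAt
  -- Step A : second derivative formula on s
  have hE2 : ∀ t ∈ s, deriv (deriv ω) t =
      (deriv ω t)^2/(2*ω t) - 2*(t^2 - 15*t + 32)/(t*(t-4)*(t-16)) * deriv ω t
        - (t-8)/(2*t*(t-4)*(t-16)) * ω t := by
    intro t ht
    obtain ⟨ht0, ht4, ht16⟩ := hx t ht
    have hWt := hnz t ht
    have ht4' : t - 4 ≠ 0 := sub_ne_zero.mpr ht4
    have ht16' : t - 16 ≠ 0 := sub_ne_zero.mpr ht16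
    have hqt : t*(t-4)*(t-16) ≠ 0 := mul_ne_zero (mul_ne_zero ht0 ht4') ht16'
    have hu : HasDerivAt (fun r => deriv ω r / ω r)
        ((deriv (deriv ω) t * ω t - deriv ω t * deriv ω t)/(ω t)^2) t :=
      (hW1 t ht).div (hW t ht) hWt
    have h := hode t ht
    rw [hu.deriv] at h
    field_simp at h
    have hfac : (2*(t*(t-4)*(t-16))*(ω t)^3) *
        ((t*(t-4)*(t-16)) * (2 * deriv (deriv ω) t * ω t - (deriv ω t)^2)
          + 4*(t^2 - 15*t + 32)*(deriv ω t)*(ω t) + (t-8)*(ω t)^2) = 0 := by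
      linear_combination (2*(t*(t-4)*(t-16))*(ω t)^3) * h
    have hK : (t*(t-4)*(t-16)) * (2 * deriv (deriv ω) t * ω t - (deriv ω t)^2)
          + 4*(t^2 - 15*t + 32)*(deriv ω t)*(ω t) + (t-8)*(ω t)^2 = 0 :=
      (mul_eq_zero.mp hfac).resolve_left
        (mul_ne_zero (mul_ne_zero two_ne_zero hqt) (pow_ne_zero 3 hWt))
    field_simp
    linear_combination hK
  intro x hxs
  obtain ⟨hx0, hx4, hx16⟩ := hx x hxs
  have hx4' : x - 4 ≠ 0 := sub_ne_zero.mpr hx4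
  have hx16' : x - 16 ≠ 0 := sub_ne_zero.mpr hx16
  have hWx := hnz x hxs
  have hqx : x*(x-4)*(x-16) ≠ 0 := mul_ne_zero (mul_ne_zero hx0 hx4') hx16'
  have hqx2 : 2*x*(x-4)*(x-16) ≠ 0 := mul_ne_zero (mul_ne_zero (mul_ne_zero two_ne_zero hx0) hx4') hx16'
  have heq : deriv (deriv ω) =ᶠ[nhds x] (fun t =>
      (deriv ω t)^2/(2*ω t) - 2*(t^2 - 15*t + 32)/(t*(t-4)*(t-16)) * deriv ω t
        - (t-8)/(2*t*(t-4)*(t-16)) * ω t) := by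
    filter_upwards [hs.mem_nhds hxs] with t ht using hE2 t ht
  have hterm1 : HasDerivAt (fun t => (deriv ω t)^2/(2*ω t))
      ((((2:ℕ) * (deriv ω x) ^ (2-1) * deriv (deriv ω) x) * (2*ω x)
        - (deriv ω x)^2 * (2 * deriv ω x)) / (2*ω x)^2) x :=
    ((hW1 x hxs).pow 2).div ((hW x hxs).const_mul 2)
      (mul_ne_zero two_ne_zero hWx)
  have hA : HasDerivAt (fun t => 2*(t^2 - 15*t + 32)/(t*(t-4)*(t-16)))
      ((2*(2*x - 15)*(x*(x-4)*(x-16)) - 2*(x^2 - 15*x + 32)*(3*x^2 - 40*x + 64))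
        / (x*(x-4)*(x-16))^2) x :=
    (hp_deriv x).div (hq_deriv x) hqx
  have hB : HasDerivAt (fun t => (t-8)/(2*t*(t-4)*(t-16)))
      ((1*(2*x*(x-4)*(x-16)) - (x-8)*(2*(3*x^2 - 40*x + 64)))
        / (2*x*(x-4)*(x-16))^2) x :=
    ((hasDerivAt_id x).sub_const 8).div (hq2_deriv x) hqx2
  have hbig : HasDerivAt (fun t =>
      (deriv ω t)^2/(2*ω t) - 2*(t^2 - 15*t + 32)/(t*(t-4)*(t-16)) * deriv ω t
        - (t-8)/(2*t*(t-4)*(t-16)) * ω t)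
      (((((2:ℕ) * (deriv ω x) ^ (2-1) * deriv (deriv ω) x) * (2*ω x)
        - (deriv ω x)^2 * (2 * deriv ω x)) / (2*ω x)^2)
       - (((2*(2*x - 15)*(x*(x-4)*(x-16)) - 2*(x^2 - 15*x + 32)*(3*x^2 - 40*x + 64))
        / (x*(x-4)*(x-16))^2) * deriv ω x
          + 2*(x^2 - 15*x + 32)/(x*(x-4)*(x-16)) * deriv (deriv ω) x)
       - (((1*(2*x*(x-4)*(x-16)) - (x-8)*(2*(3*x^2 - 40*x + 64)))
        / (2*x*(x-4)*(x-16))^2) * ω x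
          + (x-8)/(2*x*(x-4)*(x-16)) * deriv ω x)) x :=
    (hterm1.sub (hA.mul (hW1 x hxs))).sub (hB.mul (hW x hxs))
  have hd3 : deriv (deriv (deriv ω)) x = _ := (heq.deriv_eq).trans hbig.deriv
  rw [hd3, hE2 x hxs]
  field_simp
  ring
end

section
/- Under the substitution x = −(y−1)(y−9)/y, the equation ψ'' + (1/x + 1/(2(x-4)) + 1/(2(x-16)))ψ' + (x-8)/(4x(x-4)(x-16)) ψ = 0 transforms into ψ̃'' + (1/(y−1) + 1/(y−9)) ψ̃' + (y²−2y+9)/(4y²(y−1)(y−9)) ψ̃ = 0, where ψ̃(y) = ψ(x(y)) and primes now denote d/dy. -/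
private lemma hasDerivAt_g (z : ℝ) (hz : z ≠ 0) :
    HasDerivAt (fun w : ℝ => -(w-1)*(w-9)/w) (-(z^2-9)/z^2) z := by
  have h := ((((hasDerivAt_id z).sub_const 1).neg.mul ((hasDerivAt_id z).sub_const 9)).div
    (hasDerivAt_id z) hz)
  convert h using 1
  · rfl
  · rfl
  · funext w; simp; ring
  · simp only [Pi.neg_apply, Pi.mul_apply, Pi.pow_apply, id]
    field_simp
    ring

private lemma hasDerivAt_g' (z : ℝ) (hz : z ≠ 0) :
    HasDerivAt (fun w : ℝ => -(w^2-9)/w^2) (-18/z^3) z := by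
  have hz2 : z^2 ≠ 0 := pow_ne_zero _ hz
  have h := ((((hasDerivAt_id z).pow 2).sub_const 9).neg.div ((hasDerivAt_id z).pow 2) hz2)
  convert h using 1
  · rfl
  · rfl
  · funext w; simp
  · simp only [Pi.neg_apply, Pi.mul_apply, Pi.pow_apply, id]
    field_simp
    ring

set_option maxHeartbeats 2000000 in
theorem banana_change_of_variables
    (t : Set ℝ) (ht : IsOpen t) (hxt : ∀ x ∈ t, x ≠ 0 ∧ x ≠ 4 ∧ x ≠ 16)
    (ψ : ℝ → ℝ) (hψ : ContDiffOn ℝ 2 ψ t)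
    (hode : ∀ x ∈ t, deriv (deriv ψ) x
      + (1/x + 1/(2*(x-4)) + 1/(2*(x-16))) * deriv ψ x
      + (x-8)/(4*x*(x-4)*(x-16)) * ψ x = 0)
    (s : Set ℝ) (hs : IsOpen s)
    (hy : ∀ y ∈ s, y ≠ 0 ∧ y ≠ 1 ∧ y ≠ 9 ∧ y ≠ 3 ∧ y ≠ -3)
    (hmap : ∀ y ∈ s, -(y-1)*(y-9)/y ∈ t) :
    ∀ y ∈ s, deriv (deriv (fun z => ψ (-(z-1)*(z-9)/z))) y
      + (1/(y-1) + 1/(y-9)) * deriv (fun z => ψ (-(z-1)*(z-9)/z)) y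
      + (y^2 - 2*y + 9)/(4*y^2*(y-1)*(y-9)) * ψ (-(y-1)*(y-9)/y) = 0 := by
  have hψd : DifferentiableOn ℝ ψ t := hψ.differentiableOn (by norm_num)
  have hψ'c : ContDiffOn ℝ 1 (deriv ψ) t := hψ.deriv_of_isOpen ht (by norm_num)
  have hψ'd : DifferentiableOn ℝ (deriv ψ) t := hψ'c.differentiableOn (by norm_num)
  -- first derivative of the composition, on all of s
  have hF' : ∀ z ∈ s, HasDerivAt (fun w => ψ (-(w-1)*(w-9)/w))
      (deriv ψ (-(z-1)*(z-9)/z) * (-(z^2-9)/z^2)) z := by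
    intro z hz
    have hz0 : z ≠ 0 := (hy z hz).1
    have hmem := hmap z hz
    have hdψ : HasDerivAt ψ (deriv ψ (-(z-1)*(z-9)/z)) (-(z-1)*(z-9)/z) :=
      (hψd.differentiableAt (ht.mem_nhds hmem)).hasDerivAt
    have h := HasDerivAt.comp (h := fun w : ℝ => -(w-1)*(w-9)/w) z hdψ (hasDerivAt_g z hz0)
    exact h
  intro y hys
  obtain ⟨hy0, hy1, hy9, hy3, hy3'⟩ := hy y hys
  have hmem := hmap y hys
  obtain ⟨hx0, hx4, hx16⟩ := hxt _ hmem
  -- second derivative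
  have hEq : deriv (fun z => ψ (-(z-1)*(z-9)/z))
      =ᶠ[nhds y] fun z => deriv ψ (-(z-1)*(z-9)/z) * (-(z^2-9)/z^2) := by
    filter_upwards [hs.mem_nhds hys] with z hz using (hF' z hz).deriv
  have hdψ' : HasDerivAt (fun z => deriv ψ (-(z-1)*(z-9)/z))
      (deriv (deriv ψ) (-(y-1)*(y-9)/y) * (-(y^2-9)/y^2)) y := by
    have h := HasDerivAt.comp (h := fun w : ℝ => -(w-1)*(w-9)/w) y
      ((hψ'd.differentiableAt (ht.mem_nhds hmem)).hasDerivAt) (hasDerivAt_g y hy0)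
    exact h
  have hprod : HasDerivAt (fun z => deriv ψ (-(z-1)*(z-9)/z) * (-(z^2-9)/z^2))
      (deriv (deriv ψ) (-(y-1)*(y-9)/y) * (-(y^2-9)/y^2) * (-(y^2-9)/y^2)
        + deriv ψ (-(y-1)*(y-9)/y) * (-18/y^3)) y :=
    hdψ'.mul (hasDerivAt_g' y hy0)
  have h2 : deriv (deriv (fun z => ψ (-(z-1)*(z-9)/z))) y
      = deriv (deriv ψ) (-(y-1)*(y-9)/y) * (-(y^2-9)/y^2) * (-(y^2-9)/y^2)
        + deriv ψ (-(y-1)*(y-9)/y) * (-18/y^3) := by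
    rw [hEq.deriv_eq]; exact hprod.deriv
  rw [h2, (hF' y hys).deriv]
  -- use the ODE at x = g y
  have hodex := hode _ hmem
  set x := -(y-1)*(y-9)/y with hxdef
  have hR : deriv (deriv ψ) x
      = -((1/x + 1/(2*(x-4)) + 1/(2*(x-16))) * deriv ψ x
        + (x-8)/(4*x*(x-4)*(x-16)) * ψ x) := by linarith
  have hy1' : y - 1 ≠ 0 := sub_ne_zero.mpr hy1
  have hy9' : y - 9 ≠ 0 := sub_ne_zero.mpr hy9
  have hy3a : y - 3 ≠ 0 := sub_ne_zero.mpr hy3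
  have hy3b : y + 3 ≠ 0 := by intro h; exact hy3' (by linarith)
  have e4 : -(y-1)*(y-9)/y - 4 = -(y-3)^2/y := by
    field_simp
    ring
  have e16 : -(y-1)*(y-9)/y - 16 = -(y+3)^2/y := by
    field_simp
    ring
  have h19 : -(y-1)*(y-9) ≠ 0 := by
    intro h
    rcases mul_eq_zero.mp h with h | h
    · exact hy1' (by linarith [neg_eq_zero.mp h])
    · exact hy9' h
  have E1 : 1/(-(y-1)*(y-9)/y) = -y/((y-1)*(y-9)) := by
    rw [div_div_eq_mul_div, div_eq_div_iff h19 (mul_ne_zero hy1' hy9')]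
    ring
  have E2 : 1/(2*(-(y-3)^2/y)) = -y/(2*(y-3)^2) := by
    field_simp
  have E3 : 1/(2*(-(y+3)^2/y)) = -y/(2*(y+3)^2) := by
    field_simp
  have hx0' : -(y-1)*(y-9)/y ≠ 0 := hxdef ▸ hx0
  have hb : 4*(-(y-1)*(y-9)/y)*(-(y-3)^2/y)*(-(y+3)^2/y) ≠ 0 :=
    mul_ne_zero (mul_ne_zero (mul_ne_zero four_ne_zero hx0')
      (div_ne_zero (neg_ne_zero.mpr (pow_ne_zero _ hy3a)) hy0))
      (div_ne_zero (neg_ne_zero.mpr (pow_ne_zero _ hy3b)) hy0)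
  have hd : (4:ℝ)*((y-1)*(y-9)*(y-3)^2*(y+3)^2) ≠ 0 :=
    mul_ne_zero four_ne_zero
      (mul_ne_zero (mul_ne_zero (mul_ne_zero hy1' hy9') (pow_ne_zero _ hy3a))
        (pow_ne_zero _ hy3b))
  have E4 : (-(y-1)*(y-9)/y - 8)/(4*(-(y-1)*(y-9)/y)*(-(y-3)^2/y)*(-(y+3)^2/y))
      = y^2*(y^2-2*y+9)/(4*((y-1)*(y-9)*(y-3)^2*(y+3)^2)) := by
    rw [div_eq_div_iff hb hd]
    field_simp [hy0]
    ring
  rw [hR, hxdef, e4, e16, E1, E2, E3, E4]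
  set P := ψ (-(y-1)*(y-9)/y) with hP
  set Q := deriv ψ (-(y-1)*(y-9)/y) with hQ
  field_simp [hy0, hy1', hy9', hy3a, hy3b]
  ring
end

section
/- If φ(y) satisfies φ'' + (1/(y−1) + 1/(y−9)) φ' + (y²−2y+9)/(4y²(y−1)(y−9)) φ = 0, then χ(y) = φ(y)/√y satisfies the sunrise Picard–Fuchs equation χ'' + (1/y + 1/(y−1) + 1/(y−9)) χ' + (y−3)/(y(y−1)(y−9)) χ = 0, and conversely. -/
theorem sunrise_sqrt_factor
    (s : Set ℝ) (hs : IsOpen s)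
    (hy : ∀ y ∈ s, 0 < y ∧ y ≠ 1 ∧ y ≠ 9)
    (φ : ℝ → ℝ) (hφ : ContDiffOn ℝ 2 φ s) :
    (∀ y ∈ s, deriv (deriv φ) y
      + (1/(y-1) + 1/(y-9)) * deriv φ y
      + (y^2 - 2*y + 9)/(4*y^2*(y-1)*(y-9)) * φ y = 0)
    ↔
    (∀ y ∈ s, deriv (deriv (fun z => φ z / Real.sqrt z)) y
      + (1/y + 1/(y-1) + 1/(y-9)) * deriv (fun z => φ z / Real.sqrt z) y
      + (y-3)/(y*(y-1)*(y-9)) * (φ y / Real.sqrt y) = 0) := by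
  have hφ1 : ContDiffOn ℝ 1 (deriv φ) s := by
    have := hφ.deriv_of_isOpen hs (m := 1) (by norm_num)
    exact this
  have hdφ : ∀ z ∈ s, HasDerivAt φ (deriv φ z) z := fun z hz =>
    ((hφ.differentiableOn (by norm_num) z hz).differentiableAt
      (hs.mem_nhds hz)).hasDerivAt
  have hdφ' : ∀ z ∈ s, HasDerivAt (deriv φ) (deriv (deriv φ) z) z := fun z hz =>
    ((hφ1.differentiableOn (by norm_num) z hz).differentiableAt
      (hs.mem_nhds hz)).hasDerivAt
  apply forall₂_congr
  intro y hys
  obtain ⟨hy0, hy1, hy9⟩ := hy y hys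
  set g1 : ℝ → ℝ := fun z => deriv φ z / Real.sqrt z - φ z / (2 * z * Real.sqrt z) with hg1def
  have hmem : s ∩ Set.Ioi (0:ℝ) ∈ nhds y :=
    (hs.inter isOpen_Ioi).mem_nhds ⟨hys, hy0⟩
  have hEq : deriv (fun z => φ z / Real.sqrt z) =ᶠ[nhds y] g1 := by
    filter_upwards [hmem] with z hz
    obtain ⟨hzs, hz0⟩ := hz
    have hz0' : (0:ℝ) < z := hz0
    have hrz : Real.sqrt z * Real.sqrt z = z := Real.mul_self_sqrt hz0'.le
    have hrne : Real.sqrt z ≠ 0 := ne_of_gt (Real.sqrt_pos.mpr hz0')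
    have hg : HasDerivAt (fun z => φ z / Real.sqrt z)
        ((deriv φ z * Real.sqrt z - φ z * (1 / (2 * Real.sqrt z))) / (Real.sqrt z)^2) z :=
      (hdφ z hzs).div (Real.hasDerivAt_sqrt (ne_of_gt hz0')) hrne
    rw [hg.deriv, hg1def]
    have h2 : Real.sqrt z ^ 2 = z := Real.sq_sqrt hz0'.le
    field_simp
    linear_combination (φ z) * h2
  have hy' : Real.sqrt y * Real.sqrt y = y := Real.mul_self_sqrt hy0.le
  have hrne : Real.sqrt y ≠ 0 := ne_of_gt (Real.sqrt_pos.mpr hy0)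
  have hsdy : HasDerivAt Real.sqrt (1 / (2 * Real.sqrt y)) y := Real.hasDerivAt_sqrt (ne_of_gt hy0)
  have hg1y : deriv (fun z => φ z / Real.sqrt z) y = g1 y := by
    have : ∀ᶠ z in nhds y, deriv (fun z => φ z / Real.sqrt z) z = g1 z := hEq
    exact this.self_of_nhds
  have hden : HasDerivAt (fun z => 2 * z * Real.sqrt z)
      (2 * Real.sqrt y + 2 * y * (1 / (2 * Real.sqrt y))) y := by
    have h1 : HasDerivAt (fun z : ℝ => 2 * z) 2 y := by
      simpa using (hasDerivAt_id y).const_mul (2:ℝ)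
    have := h1.mul hsdy
    exact this
  have hdenne : 2 * y * Real.sqrt y ≠ 0 := by positivity
  have hA : HasDerivAt (fun z => deriv φ z / Real.sqrt z)
      ((deriv (deriv φ) y * Real.sqrt y - deriv φ y * (1 / (2 * Real.sqrt y))) / (Real.sqrt y)^2) y :=
    (hdφ' y hys).div hsdy hrne
  have hB : HasDerivAt (fun z => φ z / (2 * z * Real.sqrt z))
      ((deriv φ y * (2 * y * Real.sqrt y) - φ y * (2 * Real.sqrt y + 2 * y * (1 / (2 * Real.sqrt y))))
        / (2 * y * Real.sqrt y)^2) y :=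
    (hdφ y hys).div hden hdenne
  have hg1' : HasDerivAt g1
      ((deriv (deriv φ) y * Real.sqrt y - deriv φ y * (1 / (2 * Real.sqrt y))) / (Real.sqrt y)^2
       - (deriv φ y * (2 * y * Real.sqrt y) - φ y * (2 * Real.sqrt y + 2 * y * (1 / (2 * Real.sqrt y))))
        / (2 * y * Real.sqrt y)^2) y := hA.sub hB
  have hdd : deriv (deriv (fun z => φ z / Real.sqrt z)) y
      = (deriv (deriv φ) y * Real.sqrt y - deriv φ y * (1 / (2 * Real.sqrt y))) / (Real.sqrt y)^2
       - (deriv φ y * (2 * y * Real.sqrt y) - φ y * (2 * Real.sqrt y + 2 * y * (1 / (2 * Real.sqrt y))))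
        / (2 * y * Real.sqrt y)^2 := by
    rw [hEq.deriv_eq]
    exact hg1'.deriv
  rw [hdd, hg1y]
  simp only [hg1def]
  -- now pure algebra in r = √y
  set r := Real.sqrt y with hrdef
  have hy1' : y - 1 ≠ 0 := sub_ne_zero.mpr hy1
  have hy9' : y - 9 ≠ 0 := sub_ne_zero.mpr hy9
  have hyne : y ≠ 0 := ne_of_gt hy0
  have key : (deriv (deriv φ) y * r - deriv φ y * (1 / (2 * r))) / r^2
       - (deriv φ y * (2 * y * r) - φ y * (2 * r + 2 * y * (1 / (2 * r)))) / (2 * y * r)^2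
      + (1/y + 1/(y-1) + 1/(y-9)) * (deriv φ y / r - φ y / (2 * y * r))
      + (y-3)/(y*(y-1)*(y-9)) * (φ y / r)
      = (deriv (deriv φ) y
      + (1/(y-1) + 1/(y-9)) * deriv φ y
      + (y^2 - 2*y + 9)/(4*y^2*(y-1)*(y-9)) * φ y) / r := by
    rw [← hy']
    have h1 : r * r - 1 ≠ 0 := by rw [hy']; exact hy1'
    have h9 : r * r - 9 ≠ 0 := by rw [hy']; exact hy9'
    have h1' : r ^ 2 - 1 ≠ 0 := by rw [sq]; exact h1
    have h9' : r ^ 2 - 9 ≠ 0 := by rw [sq]; exact h9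
    field_simp
    ring
  constructor
  · intro h
    rw [key, h, zero_div]
  · intro h
    have := key.symm.trans h
    rcases div_eq_zero_iff.mp this with h' | h'
    · exact h'
    · exact absurd h' hrne
end
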